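/- Let G ∈ W(k)[X₁,…,Xₘ] be a polynomial with Witt vector coefficients and let π(G) ∈ k[X₁,…,Xₘ] be its reduction. Then for every n ≥ 1, the Teichmüller lift [π(G)^{p^{n−1}}] ∈ W(k[X₁,…,Xₘ]) is congruent to ε(G)^{p^{n−1}} modulo the image of V^n; that is, [π(G)^{p^{n−1}}] − ε(G)^{p^{n−1}} lies in V^n(W(k[X₁,…,Xₘ])). -/
import Mathlib


noncomputable section

/-- The ring homomorphism `π : W(k)[X₁,…,Xₘ] → k[X₁,…,Xₘ]` reducing each coefficient
to its 0-th Witt coordinate. -/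
def wittPi (p : ℕ) [Fact p.Prime] (m : ℕ) (k : Type*) [CommRing k] :
    MvPolynomial (Fin m) (WittVector p k) →+* MvPolynomial (Fin m) k :=
  MvPolynomial.map (WittVector.constantCoeff)

/-- The ring homomorphism `ε : W(k)[X₁,…,Xₘ] → W(k[X₁,…,Xₘ])` which on `W(k)` is
induced by functoriality of `W` from the inclusion `k → k[X₁,…,Xₘ]` and sends each
`Xᵢ` to the Teichmüller lift `[Xᵢ]`. -/
def wittEps (p : ℕ) [Fact p.Prime] (m : ℕ) (k : Type*) [CommRing k] :
    MvPolynomial (Fin m) (WittVector p k) →+* WittVector p (MvPolynomial (Fin m) k) :=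
  MvPolynomial.eval₂Hom (WittVector.map (MvPolynomial.C))
    (fun i => WittVector.teichmuller p (MvPolynomial.X i))

open WittVector Function

variable {p : ℕ} [Fact p.Prime]

/-- Iterates of Verschiebung are additive. -/
lemma aux_iterate_versch_add {R : Type*} [CommRing R] (j : ℕ) (a b : WittVector p R) :
    (⇑(verschiebung (p := p)))^[j] (a + b)
      = (⇑(verschiebung (p := p)))^[j] a + (⇑(verschiebung (p := p)))^[j] b := by
  induction j generalizing a b with
  | zero => simp
  | succ j ih =>
      rw [iterate_succ_apply, map_add, ih, ← iterate_succ_apply, ← iterate_succ_apply]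

/-- `V^[j] w * p = V^[j+1] (F w)` in characteristic `p`. -/
lemma aux_iterate_mul_p {R : Type*} [CommRing R] [CharP R p] (j : ℕ) (w : WittVector p R) :
    (⇑(verschiebung (p := p)))^[j] w * (p : WittVector p R)
      = (⇑(verschiebung (p := p)))^[j + 1] (frobenius w) := by
  have hF : (⇑(WittVector.frobenius (p := p) (R := R)))^[j] (p : WittVector p R) = p := by
    induction j with
    | zero => simp
    | succ j ih => rw [iterate_succ_apply, map_natCast, ih]
  rw [iterate_verschiebung_mul_left, hF, ← WittVector.verschiebung_frobenius,
    ← iterate_succ_apply]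

/-- Key step: a congruence mod `V^j` yields a congruence of `p`-th powers mod `V^(j+1)`. -/
lemma aux_step {R : Type*} [CommRing R] [CharP R p] (j : ℕ) (hj : 1 ≤ j)
    (x y : WittVector p R)
    (h : ∃ z, x - y = (⇑(verschiebung (p := p)))^[j] z) :
    ∃ w, x ^ p - y ^ p = (⇑(verschiebung (p := p)))^[j + 1] w := by
  obtain ⟨z, hz⟩ := h
  obtain ⟨t, ht⟩ := sq_dvd_add_pow_sub_sub (x - y) y p
  have hx : x ^ p - y ^ p = (x - y) * y ^ (p - 1) * (p : WittVector p R) + (x - y) ^ 2 * t := by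
    have hyx : y + (x - y) = x := by ring
    rw [hyx] at ht
    linear_combination ht
  have h1 : (x - y) * y ^ (p - 1) * (p : WittVector p R)
      = (⇑(verschiebung (p := p)))^[j + 1]
          (WittVector.frobenius (z * (⇑(WittVector.frobenius (p := p)))^[j] (y ^ (p - 1)))) := by
    rw [hz, iterate_verschiebung_mul_left, aux_iterate_mul_p]
  have h2 : (x - y) ^ 2 * t
      = (⇑(verschiebung (p := p)))^[j + 1]
          ((⇑(verschiebung (p := p)))^[j - 1]
            ((⇑(WittVector.frobenius (p := p)))^[j] z * (⇑(WittVector.frobenius (p := p)))^[j] z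
              * (⇑(WittVector.frobenius (p := p)))^[j + j] t)) := by
    have hsq : (x - y) ^ 2 = (x - y) * (x - y) := sq (x - y)
    rw [hsq, hz, iterate_verschiebung_mul, iterate_verschiebung_mul_left,
      ← iterate_add_apply]
    congr 1
    omega
  refine ⟨WittVector.frobenius (z * (⇑(WittVector.frobenius (p := p)))^[j] (y ^ (p - 1)))
      + (⇑(verschiebung (p := p)))^[j - 1]
          ((⇑(WittVector.frobenius (p := p)))^[j] z * (⇑(WittVector.frobenius (p := p)))^[j] z
            * (⇑(WittVector.frobenius (p := p)))^[j + j] t), ?_⟩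
  rw [hx, h1, h2, aux_iterate_versch_add]

lemma aux_coeff_zero_eps (m : ℕ) (k : Type*) [CommRing k]
    (G : MvPolynomial (Fin m) (WittVector p k)) :
    WittVector.constantCoeff (wittEps p m k G) = wittPi p m k G := by
  have : (WittVector.constantCoeff (p := p)).comp (wittEps p m k) = wittPi p m k := by
    apply MvPolynomial.ringHom_ext
    · intro w
      simp only [RingHom.comp_apply, wittEps, wittPi, MvPolynomial.eval₂Hom_C,
        MvPolynomial.map_C]
      ext
      simp [WittVector.constantCoeff_apply]
    · intro i
      simp only [RingHom.comp_apply, wittEps, wittPi, MvPolynomial.eval₂Hom_X',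
        MvPolynomial.map_X]
      ext
      simp [WittVector.constantCoeff_apply]
  exact RingHom.congr_fun this G

theorem stmt0 (p m : ℕ) [Fact p.Prime] (hm : 1 ≤ m)
    (k : Type*) [CommRing k] [IsReduced k] [CharP k p]
    (G : MvPolynomial (Fin m) (WittVector p k)) (n : ℕ) (hn : 1 ≤ n) :
    ∃ y : WittVector p (MvPolynomial (Fin m) k),
      WittVector.teichmuller p ((wittPi p m k G) ^ p ^ (n - 1))
          - (wittEps p m k G) ^ p ^ (n - 1)
        = (⇑(WittVector.verschiebung (p := p)))^[n] y := by
  set a := wittPi p m k G with ha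
  set x := wittEps p m k G with hxdef
  have hbase : ∃ y0, WittVector.teichmuller p a - x = (⇑(verschiebung (p := p)))^[1] y0 := by
    set d := WittVector.teichmuller p a - x with hd
    have hc : ∀ i < 1, d.coeff i = 0 := by
      intro i hi
      interval_cases i
      have : d.coeff 0 = WittVector.constantCoeff d := rfl
      rw [this, hd, map_sub, aux_coeff_zero_eps]
      have : WittVector.constantCoeff (WittVector.teichmuller p a) = a := by
        simp [WittVector.constantCoeff_apply]
      rw [this, sub_self]
    exact ⟨d.shift 1, WittVector.eq_iterate_verschiebung hc⟩
  have claim : ∀ j : ℕ, ∃ y,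
      WittVector.teichmuller p (a ^ p ^ j) - x ^ p ^ j
        = (⇑(verschiebung (p := p)))^[j + 1] y := by
    intro j
    induction j with
    | zero => simpa using hbase
    | succ j ih =>
        have := aux_step (j + 1) (by omega)
          (WittVector.teichmuller p (a ^ p ^ j)) (x ^ p ^ j) ih
        obtain ⟨w, hw⟩ := this
        rw [← map_pow (WittVector.teichmuller p) (a ^ p ^ j) p,
          ← pow_mul a (p ^ j) p, ← pow_mul x (p ^ j) p, ← pow_succ p j] at hw
        exact ⟨w, hw⟩
  obtain ⟨y, hy⟩ := claim (n - 1)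
  refine ⟨y, ?_⟩
  rw [hy]
  congr 1
  omega
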